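/- arXiv:2202.07985 — 2 statements merged into one kernel-verified Lean document; each statement's English description precedes it below -/
import Mathlib

section
/- The Lie subalgebra [ℂ_q, ℂ_q] (commutators with respect to the commutator bracket of the associative algebra ℂ_q) is spanned by the monomials t^a with a ∈ ℤ^{n+1} \ rad f, and ℂ_q = [ℂ_q, ℂ_q] ⊕ Z(ℂ_q) as vector spaces. -/
/-- `σ(a,b) = ∏_{0 ≤ i ≤ j ≤ n} q_{ji}^{a_j b_i}`. -/
noncomputable def sig {n : ℕ} (q : Fin (n+1) → Fin (n+1) → ℂˣ)
    (a b : Fin (n+1) → ℤ) : ℂˣ :=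
  ∏ i : Fin (n+1), ∏ j : Fin (n+1), if i ≤ j then q j i ^ (a j * b i) else 1

/-- `f(a,b) = σ(a,b) σ(b,a)⁻¹`. -/
noncomputable def ff {n : ℕ} (q : Fin (n+1) → Fin (n+1) → ℂˣ)
    (a b : Fin (n+1) → ℤ) : ℂˣ :=
  sig q a b * (sig q b a)⁻¹

lemma sig_add_left {n : ℕ} (q : Fin (n+1) → Fin (n+1) → ℂˣ) (a a' b : Fin (n+1) → ℤ) :
    sig q (a + a') b = sig q a b * sig q a' b := by
  unfold sig
  rw [← Finset.prod_mul_distrib]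
  refine Finset.prod_congr rfl fun i _ => ?_
  rw [← Finset.prod_mul_distrib]
  refine Finset.prod_congr rfl fun j _ => ?_
  split
  · rw [Pi.add_apply, add_mul, zpow_add]
  · rw [mul_one]

lemma sig_add_right {n : ℕ} (q : Fin (n+1) → Fin (n+1) → ℂˣ) (a b b' : Fin (n+1) → ℤ) :
    sig q a (b + b') = sig q a b * sig q a b' := by
  unfold sig
  rw [← Finset.prod_mul_distrib]
  refine Finset.prod_congr rfl fun i _ => ?_
  rw [← Finset.prod_mul_distrib]
  refine Finset.prod_congr rfl fun j _ => ?_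
  split
  · rw [Pi.add_apply, mul_add, zpow_add]
  · rw [mul_one]

lemma ff_add_left {n : ℕ} (q : Fin (n+1) → Fin (n+1) → ℂˣ) (a a' b : Fin (n+1) → ℤ) :
    ff q (a + a') b = ff q a b * ff q a' b := by
  unfold ff
  rw [sig_add_left, sig_add_right, mul_inv]
  rw [mul_mul_mul_comm]

lemma ff_self {n : ℕ} (q : Fin (n+1) → Fin (n+1) → ℂˣ) (b : Fin (n+1) → ℤ) :
    ff q b b = 1 := by
  unfold ff; group

lemma ff_eq_one_iff {n : ℕ} (q : Fin (n+1) → Fin (n+1) → ℂˣ) (a b : Fin (n+1) → ℤ) :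
    ff q a b = 1 ↔ ((sig q a b : ℂ)) = ((sig q b a : ℂ)) := by
  rw [ff, mul_inv_eq_one]
  exact ⟨fun h => by rw [h], fun h => Units.ext h⟩
theorem stmt8 {n : ℕ} (q : Fin (n+1) → Fin (n+1) → ℂˣ)
    (hq1 : ∀ i, q i i = 1) (hq2 : ∀ i j, q i j = (q j i)⁻¹)
    {C : Type*} [Ring C] [Algebra ℂ C]
    (T : (Fin (n+1) → ℤ) → C)
    (hT : ∀ a b, T a * T b = ((sig q a b : ℂ)) • T (a + b))
    (hT0 : T 0 = 1)
    (hTind : LinearIndependent ℂ T)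
    (hTspan : Submodule.span ℂ (Set.range T) = ⊤) :
    Submodule.span ℂ {x : C | ∃ y z : C, x = y * z - z * y} =
      Submodule.span ℂ (T '' {a | ¬ ∀ b, ff q a b = 1}) ∧
    IsCompl (Submodule.span ℂ {x : C | ∃ y z : C, x = y * z - z * y})
      (Subalgebra.toSubmodule (Subalgebra.center ℂ C)) := by
  set S : Set (Fin (n+1) → ℤ) := {a | ∀ b, ff q a b = 1} with hSdef
  set M₁ : Submodule ℂ C := Submodule.span ℂ (T '' {a | ¬ ∀ b, ff q a b = 1}) with hM₁def
  have hcomm : ∀ a b, T a * T b - T b * T a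
      = (((sig q a b : ℂ)) - ((sig q b a : ℂ))) • T (a + b) := by
    intro a b
    rw [hT a b, hT b a, add_comm b a, sub_smul]
  -- base case for commutators
  have hbase : ∀ a b, T a * T b - T b * T a ∈ M₁ := by
    intro a b
    rw [hcomm]
    by_cases h : ff q a b = 1
    · rw [(ff_eq_one_iff q a b).mp h, sub_self, zero_smul]
      exact zero_mem _
    · refine Submodule.smul_mem _ _ (Submodule.subset_span ⟨a + b, fun hall => h ?_, rfl⟩)
      have := hall b
      rwa [ff_add_left, ff_self, mul_one] at this
  have hgen : ∀ y z : C, y * z - z * y ∈ M₁ := by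
    have step1 : ∀ (a) (z : C), T a * z - z * T a ∈ M₁ := by
      intro a z
      have hle : Submodule.span ℂ (Set.range T)
          ≤ M₁.comap (LinearMap.mulLeft ℂ (T a) - LinearMap.mulRight ℂ (T a)) := by
        rw [Submodule.span_le]
        rintro _ ⟨b, rfl⟩
        simpa using hbase a b
      simpa using hle (hTspan ▸ Submodule.mem_top)
    intro y z
    have hle : Submodule.span ℂ (Set.range T)
        ≤ M₁.comap (LinearMap.mulRight ℂ z - LinearMap.mulLeft ℂ z) := by
      rw [Submodule.span_le]
      rintro _ ⟨a, rfl⟩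
      simpa using step1 a z
    simpa using hle (hTspan ▸ Submodule.mem_top)
  have hA : Submodule.span ℂ {x : C | ∃ y z : C, x = y * z - z * y} ≤ M₁ := by
    rw [Submodule.span_le]
    rintro _ ⟨y, z, rfl⟩
    exact hgen y z
  have hB : M₁ ≤ Submodule.span ℂ {x : C | ∃ y z : C, x = y * z - z * y} := by
    rw [hM₁def, Submodule.span_le]
    rintro _ ⟨c, hc, rfl⟩
    push_neg at hc
    obtain ⟨b, hb⟩ := hc
    have hcb : ff q (c - b) b = ff q c b := by
      have h2 := ff_add_left q (c - b) b b
      rw [sub_add_cancel, ff_self, mul_one] at h2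
      exact h2.symm
    have hne : ((sig q (c-b) b : ℂ)) - ((sig q b (c-b) : ℂ)) ≠ 0 := by
      intro h
      exact hb (hcb ▸ (ff_eq_one_iff q (c-b) b).mpr (sub_eq_zero.mp h))
    have hrw : T (c - b) * T b - T b * T (c - b)
        = (((sig q (c-b) b : ℂ)) - ((sig q b (c-b) : ℂ))) • T c := by
      rw [hcomm]
      congr 1
      rw [sub_add_cancel]
    have hTc : T c = (((sig q (c-b) b : ℂ)) - ((sig q b (c-b) : ℂ)))⁻¹
        • (T (c-b) * T b - T b * T (c-b)) := by
      rw [hrw, smul_smul, inv_mul_cancel₀ hne, one_smul]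
    rw [hTc]
    exact Submodule.smul_mem _ _ (Submodule.subset_span ⟨_, _, rfl⟩)
  have hM1 : Submodule.span ℂ {x : C | ∃ y z : C, x = y * z - z * y} = M₁ :=
    le_antisymm hA hB
  -- center = span (T '' S)
  have hcen_ge : Submodule.span ℂ (T '' S) ≤ Subalgebra.toSubmodule (Subalgebra.center ℂ C) := by
    rw [Submodule.span_le]
    rintro _ ⟨a, ha, rfl⟩
    simp only [SetLike.mem_coe, Subalgebra.mem_toSubmodule]
    rw [Subalgebra.mem_center_iff]
    intro z
    have hker : Submodule.span ℂ (Set.range T)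
        ≤ LinearMap.ker (LinearMap.mulLeft ℂ (T a) - LinearMap.mulRight ℂ (T a)) := by
      rw [Submodule.span_le]
      rintro _ ⟨b, rfl⟩
      simp only [SetLike.mem_coe, LinearMap.mem_ker, LinearMap.sub_apply,
        LinearMap.mulLeft_apply, LinearMap.mulRight_apply]
      rw [hcomm, (ff_eq_one_iff q a b).mp (ha b), sub_self, zero_smul]
    have := hker (hTspan ▸ Submodule.mem_top : z ∈ _)
    simp only [LinearMap.mem_ker, LinearMap.sub_apply, LinearMap.mulLeft_apply,
      LinearMap.mulRight_apply] at this
    exact (sub_eq_zero.mp this).symm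
  have hcen_le : Subalgebra.toSubmodule (Subalgebra.center ℂ C) ≤ Submodule.span ℂ (T '' S) := by
    intro x hx
    simp only [Subalgebra.mem_toSubmodule] at hx
    rw [Subalgebra.mem_center_iff] at hx
    set bas : Module.Basis (Fin (n+1) → ℤ) ℂ C := Module.Basis.mk hTind (le_of_eq hTspan.symm) with hbas
    have hbasT : ⇑bas = T := Module.Basis.coe_mk _ _
    have hxrepr : ∑ a ∈ (bas.repr x).support, (bas.repr x) a • T a = x := by
      conv_rhs => rw [← bas.linearCombination_repr x]
      rw [Finsupp.linearCombination_apply, Finsupp.sum, hbasT]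
    -- support of repr x is in S
    have hsupp : ∀ a ∈ (bas.repr x).support, a ∈ S := by
      intro a ha
      intro b
      have heq : T b * x = x * T b := hx (T b)
      have hzero : ∑ c ∈ (bas.repr x).support,
          ((bas.repr x) c * (((sig q b c : ℂ)) - ((sig q c b : ℂ)))) • T (c + b) = 0 := by
        have h1 : T b * x = ∑ c ∈ (bas.repr x).support,
            ((bas.repr x) c * ((sig q b c : ℂ))) • T (c + b) := by
          conv_lhs => rw [← hxrepr]
          rw [Finset.mul_sum]
          refine Finset.sum_congr rfl fun c _ => ?_
          rw [mul_smul_comm, hT, smul_smul, add_comm b c]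
        have h2 : x * T b = ∑ c ∈ (bas.repr x).support,
            ((bas.repr x) c * ((sig q c b : ℂ))) • T (c + b) := by
          conv_lhs => rw [← hxrepr]
          rw [Finset.sum_mul]
          refine Finset.sum_congr rfl fun c _ => ?_
          rw [smul_mul_assoc, hT, smul_smul]
        calc ∑ c ∈ (bas.repr x).support,
              ((bas.repr x) c * (((sig q b c : ℂ)) - ((sig q c b : ℂ)))) • T (c + b)
            = ∑ c ∈ (bas.repr x).support,
              (((bas.repr x) c * ((sig q b c : ℂ))) • T (c + b)
                - ((bas.repr x) c * ((sig q c b : ℂ))) • T (c + b)) := by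
              refine Finset.sum_congr rfl fun c _ => ?_
              rw [mul_sub, sub_smul]
          _ = T b * x - x * T b := by rw [Finset.sum_sub_distrib, ← h1, ← h2]
          _ = 0 := by rw [heq, sub_self]
      -- reindex
      have hinj : Function.Injective (fun c : Fin (n+1) → ℤ => c + b) :=
        fun c₁ c₂ h => by simpa using congrArg (· - b) h
      set g : (Fin (n+1) → ℤ) → ℂ := fun c =>
        (bas.repr x) (c - b) * (((sig q b (c - b) : ℂ)) - ((sig q (c - b) b : ℂ))) with hg
      have hsum : ∑ c ∈ (bas.repr x).support.image (· + b), g c • T c = 0 := by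
        rw [Finset.sum_image (fun c₁ _ c₂ _ h => hinj h)]
        rw [← hzero]
        refine Finset.sum_congr rfl fun c _ => ?_
        simp only [hg, add_sub_cancel_right]
      have := linearIndependent_iff'.mp hTind _ g hsum (a + b)
        (Finset.mem_image_of_mem _ ha)
      simp only [hg, add_sub_cancel_right] at this
      have hca : (bas.repr x) a ≠ 0 := Finsupp.mem_support_iff.mp ha
      have := (mul_eq_zero.mp this).resolve_left hca
      exact (ff_eq_one_iff q a b).mpr (sub_eq_zero.mp this).symm
    rw [← hxrepr]
    exact Submodule.sum_mem _ fun a ha =>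
      Submodule.smul_mem _ _ (Submodule.subset_span ⟨a, hsupp a ha, rfl⟩)
  have hcen : Subalgebra.toSubmodule (Subalgebra.center ℂ C) = Submodule.span ℂ (T '' S) :=
    le_antisymm hcen_le hcen_ge
  refine ⟨hM1, ?_⟩
  rw [hM1, hcen, hM₁def]
  constructor
  · exact hTind.disjoint_span_image (by
      rw [Set.disjoint_left]
      intro a ha haS
      exact ha haS)
  · rw [codisjoint_iff, ← Submodule.span_union, ← Set.image_union]
    have hu : {a | ¬ ∀ b, ff q a b = 1} ∪ S = Set.univ := by
      ext a
      simp only [Set.mem_union, Set.mem_setOf_eq, Set.mem_univ, iff_true, hSdef]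
      exact or_comm.mp (em _)
    rw [hu, Set.image_univ, hTspan]
end

section
/- The graded component of degree a of HC_1(ℂ_q) has dimension 0 if a ∉ rad f, dimension n if a ∈ rad f \ {0}, and dimension n+1 if a = 0. -/
open scoped TensorProduct

/-- The subspace `J ⊆ ℂ_q ⊗ ℂ_q` spanned by `x⊗y + y⊗x` and
`xy⊗z + yz⊗x + zx⊗y`. -/
noncomputable def Jmod (C : Type*) [Ring C] [Algebra ℂ C] :
    Submodule ℂ (C ⊗[ℂ] C) :=
  Submodule.span ℂ
    ({p | ∃ x y : C, p = x ⊗ₜ[ℂ] y + y ⊗ₜ[ℂ] x} ∪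
     {p | ∃ x y z : C, p = (x * y) ⊗ₜ[ℂ] z + (y * z) ⊗ₜ[ℂ] x + (z * x) ⊗ₜ[ℂ] y})

/-- `⟨x,y⟩`, the class of `x ⊗ y` in `(ℂ_q ⊗ ℂ_q)/J`. -/
noncomputable def bra {C : Type*} [Ring C] [Algebra ℂ C] (x y : C) :
    (C ⊗[ℂ] C) ⧸ Jmod C :=
  Submodule.Quotient.mk (x ⊗ₜ[ℂ] y)

/-- The commutator map `C ⊗ C → C`, `x ⊗ y ↦ xy - yx`. -/
noncomputable def brkt (C : Type*) [Ring C] [Algebra ℂ C] :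
    C ⊗[ℂ] C →ₗ[ℂ] C :=
  TensorProduct.lift (LinearMap.mul ℂ C - (LinearMap.mul ℂ C).flip)

/-- `HC₁(ℂ_q) = { ∑ ⟨xᵢ,yᵢ⟩ : ∑ [xᵢ,yᵢ] = 0 }`, the image in `(ℂ_q⊗ℂ_q)/J` of the
kernel of the commutator map. -/
noncomputable def HC1 (C : Type*) [Ring C] [Algebra ℂ C] :
    Submodule ℂ ((C ⊗[ℂ] C) ⧸ Jmod C) :=
  (LinearMap.ker (brkt C)).map (Jmod C).mkQ


namespace Stmt13Aux


variable {n : ℕ} (q : Fin (n+1) → Fin (n+1) → ℂˣ)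

lemma sig_add_left (a b c : Fin (n+1) → ℤ) :
    sig q (a + b) c = sig q a c * sig q b c := by
  unfold sig
  rw [← Finset.prod_mul_distrib]
  refine Finset.prod_congr rfl fun i _ => ?_
  rw [← Finset.prod_mul_distrib]
  refine Finset.prod_congr rfl fun j _ => ?_
  by_cases h : i ≤ j
  · simp only [if_pos h, Pi.add_apply, add_mul, zpow_add]
  · simp only [if_neg h, one_mul]

lemma sig_add_right (a b c : Fin (n+1) → ℤ) :
    sig q a (b + c) = sig q a b * sig q a c := by
  unfold sig
  rw [← Finset.prod_mul_distrib]
  refine Finset.prod_congr rfl fun i _ => ?_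
  rw [← Finset.prod_mul_distrib]
  refine Finset.prod_congr rfl fun j _ => ?_
  by_cases h : i ≤ j
  · simp only [if_pos h, Pi.add_apply, mul_add, zpow_add]
  · simp only [if_neg h, one_mul]

lemma sig_zero_left (b : Fin (n+1) → ℤ) : sig q 0 b = 1 := by simp [sig]

lemma sig_zero_right (a : Fin (n+1) → ℤ) : sig q a 0 = 1 := by simp [sig]

lemma sig_neg_right (a b : Fin (n+1) → ℤ) : sig q a (-b) = (sig q a b)⁻¹ := by
  have h : sig q a b * sig q a (-b) = 1 := by
    rw [← sig_add_right, add_neg_cancel, sig_zero_right]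
  exact eq_inv_of_mul_eq_one_right h

lemma sig_neg_left (a b : Fin (n+1) → ℤ) : sig q (-a) b = (sig q a b)⁻¹ := by
  have h : sig q a b * sig q (-a) b = 1 := by
    rw [← sig_add_left, add_neg_cancel, sig_zero_left]
  exact eq_inv_of_mul_eq_one_right h

lemma cs_ne (a b : Fin (n+1) → ℤ) : ((sig q a b : ℂˣ) : ℂ) ≠ 0 := Units.ne_zero _

lemma cs_add_left (a b c : Fin (n+1) → ℤ) :
    ((sig q (a + b) c : ℂˣ) : ℂ) = (sig q a c : ℂ) * (sig q b c : ℂ) := by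
  rw [sig_add_left, Units.val_mul]

lemma cs_add_right (a b c : Fin (n+1) → ℤ) :
    ((sig q a (b + c) : ℂˣ) : ℂ) = (sig q a b : ℂ) * (sig q a c : ℂ) := by
  rw [sig_add_right, Units.val_mul]

lemma cs_sub_right (a b c : Fin (n+1) → ℤ) :
    ((sig q a (b - c) : ℂˣ) : ℂ) = (sig q a b : ℂ) / (sig q a c : ℂ) := by
  rw [sub_eq_add_neg, sig_add_right, sig_neg_right, Units.val_mul,
    Units.val_inv_eq_inv_val, div_eq_mul_inv]

lemma cs_sub_left (a b c : Fin (n+1) → ℤ) :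
    ((sig q (a - b) c : ℂˣ) : ℂ) = (sig q a c : ℂ) / (sig q b c : ℂ) := by
  rw [sub_eq_add_neg, sig_add_left, sig_neg_left, Units.val_mul,
    Units.val_inv_eq_inv_val, div_eq_mul_inv]

lemma cs_zero_right (a : Fin (n+1) → ℤ) : ((sig q a 0 : ℂˣ) : ℂ) = 1 := by
  rw [sig_zero_right, Units.val_one]

lemma rad_comm {a : Fin (n+1) → ℤ} (hrad : ∀ b, ff q a b = 1) (b : Fin (n+1) → ℤ) :
    ((sig q a b : ℂˣ) : ℂ) = (sig q b a : ℂ) := by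
  have h := hrad b
  unfold ff at h
  rw [mul_inv_eq_one] at h
  rw [h]

lemma cs_symm {a : Fin (n+1) → ℤ} (hrad : ∀ b, ff q a b = 1) {r s : Fin (n+1) → ℤ}
    (h : r + s = a) : ((sig q r s : ℂˣ) : ℂ) = (sig q s r : ℂ) := by
  have h1 : (sig q r s : ℂ) * (sig q r r : ℂ) = (sig q r a : ℂ) := by
    rw [← cs_add_right, show s + r = a from by rw [← h]; abel]
  have h2 : (sig q s r : ℂ) * (sig q r r : ℂ) = (sig q a r : ℂ) := by
    rw [← cs_add_left, show s + r = a from by rw [← h]; abel]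
  have h4 : (sig q s r : ℂ) * (sig q r r : ℂ) = (sig q r a : ℂ) := by
    rw [h2, rad_comm q hrad r]
  exact mul_right_cancel₀ (cs_ne q r r) (h1.trans h4.symm)

lemma cs_F1 (a r s : Fin (n+1) → ℤ) :
    ((sig q (r + s) (a - r - s) : ℂˣ) : ℂ) * (sig q r s : ℂ)
      = (sig q s (a - r - s) : ℂ) * (sig q r (a - r) : ℂ) := by
  rw [cs_add_left q r s (a - r - s), cs_sub_right q r (a - r) s, cs_sub_right q s (a - r) s,
    cs_sub_right q r a r, cs_sub_right q s a r]
  field_simp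

lemma cs_F2 {a : Fin (n+1) → ℤ} (hrad : ∀ b, ff q a b = 1) (r s : Fin (n+1) → ℤ) :
    ((sig q (r + s) (a - r - s) : ℂˣ) : ℂ) * (sig q r s : ℂ)
      = (sig q (a - r - s) r : ℂ) * (sig q s (a - s) : ℂ) := by
  rw [cs_add_left q r s (a - r - s), cs_sub_right q r (a - r) s, cs_sub_right q s (a - r) s,
    cs_sub_right q r a r, cs_sub_right q s a r,
    cs_sub_left q (a - r) s r, cs_sub_left q a r r,
    cs_sub_right q s a s, rad_comm q hrad r]
  field_simp

lemma cs_F4a {a : Fin (n+1) → ℤ} (hrad : ∀ b, ff q a b = 1) {r s u : Fin (n+1) → ℤ}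
    (h : r + s + u = a) :
    ((sig q (s + u) r : ℂˣ) : ℂ) * (sig q s u : ℂ)
      = (sig q (r + s) u : ℂ) * (sig q r s : ℂ) := by
  have hsu : s + u = a - r := by rw [← h]; abel
  have key : ((sig q s r : ℂˣ) : ℂ) * (sig q u r : ℂ) = (sig q r s : ℂ) * (sig q r u : ℂ) := by
    rw [← cs_add_left q s u r, ← cs_add_right q r s u, hsu, cs_sub_left q a r r,
      cs_sub_right q r a r, rad_comm q hrad r]
  rw [cs_add_left q s u r, cs_add_left q r s u]
  linear_combination ((sig q s u : ℂˣ) : ℂ) * key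

lemma cs_F4b {a : Fin (n+1) → ℤ} (hrad : ∀ b, ff q a b = 1) {r s u : Fin (n+1) → ℤ}
    (h : r + s + u = a) :
    ((sig q (u + r) s : ℂˣ) : ℂ) * (sig q u r : ℂ)
      = (sig q (r + s) u : ℂ) * (sig q r s : ℂ) := by
  have hrs : s + r = a - u := by rw [← h]; abel
  have hrs' : r + s = a - u := by rw [← h]; abel
  have key : ((sig q u s : ℂˣ) : ℂ) * (sig q u r : ℂ) = (sig q r u : ℂ) * (sig q s u : ℂ) := by
    rw [← cs_add_right q u s r, ← cs_add_left q r s u, hrs, hrs', cs_sub_left q a u u,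
      cs_sub_right q u a u, rad_comm q hrad u]
  rw [cs_add_left q u r s, cs_add_left q r s u]
  linear_combination ((sig q r s : ℂˣ) : ℂ) * key


section Alg

variable {n : ℕ} (q : Fin (n+1) → Fin (n+1) → ℂˣ)
variable {C : Type*} [Ring C] [Algebra ℂ C] (T : (Fin (n+1) → ℤ) → C)

lemma brkt_tmul (x y : C) : brkt C (x ⊗ₜ[ℂ] y) = x * y - y * x := by
  simp [brkt, TensorProduct.lift.tmul, LinearMap.sub_apply, LinearMap.flip_apply,
    LinearMap.mul_apply']

lemma Jmod_le_ker : Jmod C ≤ LinearMap.ker (brkt C) := by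
  rw [Jmod, Submodule.span_le]
  rintro p (⟨x, y, rfl⟩ | ⟨x, y, z, rfl⟩) <;>
    simp only [SetLike.mem_coe, LinearMap.mem_ker, map_add, brkt_tmul]
  · abel
  · simp only [mul_assoc]
    abel

lemma bra_swap (x y : C) : bra x y = - bra y x := by
  have h0 : bra x y + bra y x = (0 : (C ⊗[ℂ] C) ⧸ Jmod C) := by
    rw [bra, bra, ← Submodule.Quotient.mk_add]
    exact (Submodule.Quotient.mk_eq_zero _).2
      (Submodule.subset_span (Or.inl ⟨x, y, rfl⟩))
  exact eq_neg_of_add_eq_zero_left h0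

lemma bra_cyc (hT : ∀ a b, T a * T b = ((sig q a b : ℂ)) • T (a + b))
    (r s u : Fin (n+1) → ℤ) :
    ((sig q r s : ℂˣ) : ℂ) • bra (T (r+s)) (T u) + (sig q s u : ℂ) • bra (T (s+u)) (T r)
      + (sig q u r : ℂ) • bra (T (u+r)) (T s) = 0 := by
  have hm : ((T r * T s) ⊗ₜ[ℂ] T u + (T s * T u) ⊗ₜ[ℂ] T r + (T u * T r) ⊗ₜ[ℂ] T s) ∈ Jmod C :=
    Submodule.subset_span (Or.inr ⟨T r, T s, T u, rfl⟩)
  have h0 := (Submodule.Quotient.mk_eq_zero (Jmod C)).2 hm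
  rw [hT r s, hT s u, hT u r] at h0
  simpa only [← TensorProduct.smul_tmul', Submodule.Quotient.mk_add,
    Submodule.Quotient.mk_smul, bra] using h0

lemma bra_T_zero (hT : ∀ a b, T a * T b = ((sig q a b : ℂ)) • T (a + b))
    (p : Fin (n+1) → ℤ) : bra (T p) (T 0) = 0 := by
  have h := bra_cyc q T hT p 0 0
  simp only [add_zero, zero_add] at h
  simp only [sig_zero_left, sig_zero_right, Units.val_one, one_smul] at h
  rw [bra_swap (T 0) (T p)] at h
  simpa using h

end Alg

section Deg

variable {n : ℕ} (q : Fin (n+1) → Fin (n+1) → ℂˣ)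
variable {C : Type*} [Ring C] [Algebra ℂ C] (T : (Fin (n+1) → ℤ) → C)

/-- `⟨t^r, t^{a-r}⟩`. -/
noncomputable def cc (a r : Fin (n+1) → ℤ) : (C ⊗[ℂ] C) ⧸ Jmod C :=
  bra (T r) (T (a - r))

/-- standard basis vector. -/
def ee (i : Fin (n+1)) : Fin (n+1) → ℤ := fun j => if i = j then 1 else 0

/-- normalized generator. -/
noncomputable def Dfun (a r : Fin (n+1) → ℤ) : (C ⊗[ℂ] C) ⧸ Jmod C :=
  ((sig q r (a - r) : ℂˣ) : ℂ)⁻¹ • cc T a r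

lemma bra_rel (hT : ∀ a b, T a * T b = ((sig q a b : ℂ)) • T (a + b))
    (a r s : Fin (n+1) → ℤ) :
    ((sig q r s : ℂˣ) : ℂ) • cc T a (r + s)
      = (sig q s (a - r - s) : ℂ) • cc T a r + (sig q (a - r - s) r : ℂ) • cc T a s := by
  have h := bra_cyc q T hT r s (a - r - s)
  rw [show s + (a - r - s) = a - r from by abel] at h
  rw [show (a - r - s) + r = a - s from by abel] at h
  rw [bra_swap (T (a - r)) (T r), bra_swap (T (a - s)) (T s), smul_neg, smul_neg] at h
  unfold cc
  rw [show a - (r + s) = a - r - s from (sub_sub a r s).symm]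
  rw [add_assoc, ← neg_add, add_neg_eq_zero] at h
  exact h

lemma Dfun_add (hT : ∀ a b, T a * T b = ((sig q a b : ℂ)) • T (a + b))
    {a : Fin (n+1) → ℤ} (hrad : ∀ b, ff q a b = 1) (r s : Fin (n+1) → ℤ) :
    Dfun q T a (r + s) = Dfun q T a r + Dfun q T a s := by
  have hrel := bra_rel q T hT a r s
  have e2 : (((sig q r s : ℂˣ) : ℂ) * (sig q (r+s) (a - r - s) : ℂ)) * ((sig q r (a - r) : ℂ))⁻¹
      = (sig q s (a - r - s) : ℂ) := by
    have hF := cs_F1 q a r s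
    field_simp
    linear_combination hF
  have e3 : (((sig q r s : ℂˣ) : ℂ) * (sig q (r+s) (a - r - s) : ℂ)) * ((sig q s (a - s) : ℂ))⁻¹
      = (sig q (a - r - s) r : ℂ) := by
    have hF := cs_F2 q hrad r s
    field_simp
    linear_combination hF
  unfold Dfun
  rw [show a - (r + s) = a - r - s from (sub_sub a r s).symm]
  apply smul_right_injective _
    (mul_ne_zero (cs_ne q r s) (cs_ne q (r+s) (a - r - s)))
  dsimp only
  rw [smul_add, smul_smul, smul_smul, smul_smul,
    mul_inv_cancel_right₀ (cs_ne q (r+s) (a - r - s)), e2, e3]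
  exact hrel

lemma Dfun_repr (hT : ∀ a b, T a * T b = ((sig q a b : ℂ)) • T (a + b))
    {a : Fin (n+1) → ℤ} (hrad : ∀ b, ff q a b = 1) (r : Fin (n+1) → ℤ) :
    Dfun q T a r = ∑ i, (r i) • Dfun q T a (ee i) := by
  classical
  have h1 : r = ∑ i, (r i) • ee i := pi_eq_sum_univ r
  let D : (Fin (n+1) → ℤ) →+ ((C ⊗[ℂ] C) ⧸ Jmod C) :=
    AddMonoidHom.mk' (Dfun q T a) (Dfun_add q T hT hrad)
  have h2 : Dfun q T a r = D (∑ i, (r i) • ee i) := congrArg D h1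
  rw [h2, map_sum]
  exact Finset.sum_congr rfl fun i _ => map_zsmul D _ _

lemma Dfun_relation (hT : ∀ a b, T a * T b = ((sig q a b : ℂ)) • T (a + b))
    {a : Fin (n+1) → ℤ} (hrad : ∀ b, ff q a b = 1) :
    ∑ i, (a i) • Dfun q T a (ee i) = 0 := by
  rw [← Dfun_repr q T hT hrad a]
  unfold Dfun cc
  rw [sub_self, bra_T_zero q T hT, smul_zero]

lemma cc_eq_smul_Dfun (a r : Fin (n+1) → ℤ) :
    cc T a r = ((sig q r (a - r) : ℂˣ) : ℂ) • Dfun q T a r := by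
  rw [Dfun, smul_smul, mul_inv_cancel₀ (cs_ne q r (a - r)), one_smul]

end Deg

section Func

variable {n : ℕ} (q : Fin (n+1) → Fin (n+1) → ℂˣ)
variable {C : Type*} [Ring C] [Algebra ℂ C] (T : (Fin (n+1) → ℤ) → C)

/-- the functional on monomial pairs. -/
noncomputable def lam (a : Fin (n+1) → ℤ) (μ : Fin (n+1) → ℂ)
    (r s : Fin (n+1) → ℤ) : ℂ :=
  if r + s = a then (∑ i, μ i * (r i : ℂ)) * (sig q r s : ℂ) else 0

lemma dot_add (μ : Fin (n+1) → ℂ) (x y : Fin (n+1) → ℤ) :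
    (∑ i, μ i * (((x + y) i : ℤ) : ℂ)) = (∑ i, μ i * (x i : ℂ)) + ∑ i, μ i * (y i : ℂ) := by
  rw [← Finset.sum_add_distrib]
  refine Finset.sum_congr rfl fun i _ => ?_
  rw [Pi.add_apply]
  push_cast
  ring

lemma lam_sym {a : Fin (n+1) → ℤ} (hrad : ∀ b, ff q a b = 1) (μ : Fin (n+1) → ℂ)
    (hμ : ∑ i, μ i * (a i : ℂ) = 0) (r s : Fin (n+1) → ℤ) :
    lam q a μ r s + lam q a μ s r = 0 := by
  unfold lam
  by_cases h : r + s = a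
  · rw [if_pos h, if_pos (show s + r = a from by rw [add_comm s r]; exact h)]
    rw [cs_symm q hrad h]
    have hsum : (∑ i, μ i * (r i : ℂ)) + (∑ i, μ i * (s i : ℂ)) = 0 := by
      rw [← dot_add, h]
      exact hμ
    linear_combination ((sig q s r : ℂˣ) : ℂ) * hsum
  · rw [if_neg h, if_neg (fun hc => h (by rw [add_comm r s]; exact hc)), add_zero]

lemma lam_cyc {a : Fin (n+1) → ℤ} (hrad : ∀ b, ff q a b = 1) (μ : Fin (n+1) → ℂ)
    (hμ : ∑ i, μ i * (a i : ℂ) = 0) (r s u : Fin (n+1) → ℤ) :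
    ((sig q r s : ℂˣ) : ℂ) * lam q a μ (r+s) u + (sig q s u : ℂ) * lam q a μ (s+u) r
      + (sig q u r : ℂ) * lam q a μ (u+r) s = 0 := by
  unfold lam
  by_cases h : r + s + u = a
  · have h1 : (r + s) + u = a := h
    have h2 : (s + u) + r = a := by rw [← h]; abel
    have h3 : (u + r) + s = a := by rw [← h]; abel
    rw [if_pos h1, if_pos h2, if_pos h3]
    have e2 : ((sig q (s+u) r : ℂˣ) : ℂ) * (sig q s u : ℂ)
        = (sig q (r+s) u : ℂ) * (sig q r s : ℂ) := cs_F4a q hrad h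
    have e3 : ((sig q (u+r) s : ℂˣ) : ℂ) * (sig q u r : ℂ)
        = (sig q (r+s) u : ℂ) * (sig q r s : ℂ) := cs_F4b q hrad h
    have hd : (∑ i, μ i * (((r+s) i : ℤ) : ℂ)) + (∑ i, μ i * (((s+u) i : ℤ) : ℂ))
        + (∑ i, μ i * (((u+r) i : ℤ) : ℂ)) = 0 := by
      rw [dot_add, dot_add, dot_add]
      have h2a : (∑ i, μ i * (r i : ℂ)) + (∑ i, μ i * (s i : ℂ)) + (∑ i, μ i * (u i : ℂ)) = 0 := by
        have := hμ
        rw [← h] at this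
        rw [dot_add, dot_add] at this
        exact this
      linear_combination 2 * h2a
    linear_combination (∑ i, μ i * (((s+u) i : ℤ) : ℂ)) * e2
      + (∑ i, μ i * (((u+r) i : ℤ) : ℂ)) * e3
      + (((sig q (r+s) u : ℂˣ) : ℂ) * (sig q r s : ℂ)) * hd
  · rw [if_neg (fun hc => h hc), if_neg (fun hc => h (by rw [← hc]; abel)),
      if_neg (fun hc => h (by rw [← hc]; abel))]
    ring

lemma exists_L (hT : ∀ a b, T a * T b = ((sig q a b : ℂ)) • T (a + b))
    (hTind : LinearIndependent ℂ T)
    (hTspan : Submodule.span ℂ (Set.range T) = ⊤)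
    {a : Fin (n+1) → ℤ} (hrad : ∀ b, ff q a b = 1) (μ : Fin (n+1) → ℂ)
    (hμ : ∑ i, μ i * (a i : ℂ) = 0) :
    ∃ L : ((C ⊗[ℂ] C) ⧸ Jmod C) →ₗ[ℂ] ℂ,
      ∀ r, L (cc T a r) = (∑ i, μ i * (r i : ℂ)) * (sig q r (a - r) : ℂ) := by
  classical
  let bb : Module.Basis (Fin (n+1) → ℤ) ℂ C := Module.Basis.mk hTind hTspan.ge
  have hbT : ∀ r, bb r = T r := fun r => Module.Basis.mk_apply hTind hTspan.ge r
  let B : C →ₗ[ℂ] C →ₗ[ℂ] ℂ := bb.constr ℂ fun r => bb.constr ℂ fun s => lam q a μ r s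
  have hBT : ∀ r s, B (T r) (T s) = lam q a μ r s := by
    intro r s
    rw [← hbT r, ← hbT s]
    show (bb.constr ℂ fun r => bb.constr ℂ fun s => lam q a μ r s) (bb r) (bb s) = lam q a μ r s
    rw [Module.Basis.constr_basis, Module.Basis.constr_basis]
  have hsym : ∀ x y : C, B x y + B y x = 0 := by
    have h0 : B + B.flip = 0 := by
      refine bb.ext fun r => bb.ext fun s => ?_
      simp only [LinearMap.add_apply, LinearMap.flip_apply, LinearMap.zero_apply, hbT, hBT]
      exact lam_sym q hrad μ hμ r s
    intro x y
    have h1 := DFunLike.congr_fun (DFunLike.congr_fun h0 x) y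
    simpa only [LinearMap.add_apply, LinearMap.flip_apply, LinearMap.zero_apply] using h1
  have hcyc : ∀ x y z : C, B (x * y) z + B (y * z) x + B (z * x) y = 0 := by
    have h0 : ((LinearMap.mul ℂ C).compr₂ B
        + (LinearMap.lflip.comp ((LinearMap.mul ℂ C).compr₂ B)).flip
        + LinearMap.lflip.comp ((LinearMap.mul ℂ C).compr₂ B).flip) = 0 := by
      refine bb.ext fun r => bb.ext fun s => bb.ext fun u => ?_
      simp only [LinearMap.add_apply, LinearMap.flip_apply, LinearMap.coe_comp,
        Function.comp_apply, LinearEquiv.coe_coe, LinearMap.lflip_apply, LinearMap.compr₂_apply,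
        LinearMap.mul_apply', LinearMap.zero_apply, hbT]
      rw [hT r s, hT s u, hT u r, map_smul, map_smul, map_smul]
      simp only [LinearMap.smul_apply, smul_eq_mul, hBT]
      exact lam_cyc q hrad μ hμ r s u
    intro x y z
    have h1 := DFunLike.congr_fun (DFunLike.congr_fun (DFunLike.congr_fun h0 x) y) z
    simpa only [LinearMap.add_apply, LinearMap.flip_apply, LinearMap.coe_comp,
      Function.comp_apply, LinearEquiv.coe_coe, LinearMap.lflip_apply, LinearMap.compr₂_apply,
      LinearMap.mul_apply', LinearMap.zero_apply] using h1
  have hJker : Jmod C ≤ LinearMap.ker (TensorProduct.lift B) := by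
    rw [Jmod, Submodule.span_le]
    rintro p (⟨x, y, rfl⟩ | ⟨x, y, z, rfl⟩) <;>
      simp only [SetLike.mem_coe, LinearMap.mem_ker, map_add, TensorProduct.lift.tmul]
    · exact hsym x y
    · exact hcyc x y z
  refine ⟨(Jmod C).liftQ (TensorProduct.lift B) hJker, fun r => ?_⟩
  have h1 : cc T a r = Submodule.Quotient.mk (T r ⊗ₜ[ℂ] T (a - r)) := rfl
  rw [h1, Submodule.liftQ_apply, TensorProduct.lift.tmul, hBT]
  unfold lam
  rw [if_pos (show r + (a - r) = a from by abel)]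

end Func

section Cases

variable {n : ℕ} (q : Fin (n+1) → Fin (n+1) → ℂˣ)
variable {C : Type*} [Ring C] [Algebra ℂ C] (T : (Fin (n+1) → ℤ) → C)

lemma indep_of_dual {M : Type*} [AddCommGroup M] [Module ℂ M] {ι : Type*} [Fintype ι]
    [DecidableEq ι] (v : ι → M) (L : ι → M →ₗ[ℂ] ℂ) (d : ι → ℂ) (hd : ∀ i, d i ≠ 0)
    (h : ∀ i j, L i (v j) = if i = j then d j else 0) : LinearIndependent ℂ v := by
  rw [Fintype.linearIndependent_iff]
  intro g hg i
  have h2 := congrArg (L i) hg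
  simp only [map_sum, map_smul, map_zero, h, smul_eq_mul] at h2
  rw [Finset.sum_eq_single i
    (fun j _ hj => by rw [if_neg (fun hh => hj hh.symm), mul_zero])
    (fun hi => absurd (Finset.mem_univ i) hi)] at h2
  rw [if_pos rfl] at h2
  exact (mul_eq_zero.mp h2).resolve_right (hd i)

lemma sum_delta_mul (i : Fin (n+1)) (f : Fin (n+1) → ℂ) :
    ∑ k, (if i = k then (1:ℂ) else 0) * f k = f i := by
  simp [ite_mul, Finset.sum_ite_eq]

lemma sum_mul_ee (j : Fin (n+1)) (g : Fin (n+1) → ℂ) :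
    ∑ k, g k * ((ee j k : ℤ) : ℂ) = g j := by
  simp [ee, apply_ite (fun z : ℤ => (z : ℂ)), mul_ite, mul_one, mul_zero, Finset.sum_ite_eq]

lemma V_le_HC1 (hT : ∀ a b, T a * T b = ((sig q a b : ℂ)) • T (a + b))
    {a : Fin (n+1) → ℤ} (hrad : ∀ b, ff q a b = 1) :
    Submodule.span ℂ {v : (C ⊗[ℂ] C) ⧸ Jmod C | ∃ r s, r + s = a ∧ v = bra (T r) (T s)}
      ≤ HC1 C := by
  rw [Submodule.span_le]
  rintro v ⟨r, s, hrs, rfl⟩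
  have hz : T r ⊗ₜ[ℂ] T s ∈ LinearMap.ker (brkt C) := by
    rw [LinearMap.mem_ker, brkt_tmul, hT, hT, show s + r = r + s from add_comm s r,
      show ((sig q s r : ℂˣ) : ℂ) = (sig q r s : ℂ) from (cs_symm q hrad hrs).symm, sub_self]
  exact Submodule.mem_map_of_mem hz

lemma span_S_le_g (hT : ∀ a b, T a * T b = ((sig q a b : ℂ)) • T (a + b))
    {a : Fin (n+1) → ℤ} (hrad : ∀ b, ff q a b = 1) :
    Submodule.span ℂ {v : (C ⊗[ℂ] C) ⧸ Jmod C | ∃ r s, r + s = a ∧ v = bra (T r) (T s)}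
      ≤ Submodule.span ℂ (Set.range fun i : Fin (n+1) => cc T a (ee i)) := by
  rw [Submodule.span_le]
  rintro v ⟨r, s, hrs, rfl⟩
  have hs : s = a - r := by rw [← hrs]; abel
  subst hs
  show cc T a r ∈ _
  rw [cc_eq_smul_Dfun q T a r, Dfun_repr q T hT hrad r]
  refine Submodule.smul_mem _ _ (Submodule.sum_mem _ fun i _ => ?_)
  rw [← Int.cast_smul_eq_zsmul ℂ]
  refine Submodule.smul_mem _ _ ?_
  rw [Dfun]
  exact Submodule.smul_mem _ _ (Submodule.subset_span ⟨i, rfl⟩)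

lemma final_notrad (hT : ∀ a b, T a * T b = ((sig q a b : ℂ)) • T (a + b))
    (hTind : LinearIndependent ℂ T) {a : Fin (n+1) → ℤ}
    (hbad : ¬ ∀ b, ff q a b = 1) :
    Module.finrank ℂ
      ↥(HC1 C ⊓ Submodule.span ℂ
          {v | ∃ r s : Fin (n+1) → ℤ, r + s = a ∧ v = bra (T r) (T s)}) = 0 := by
  obtain ⟨b0, hb0⟩ := not_forall.mp hbad
  have hone : ((sig q a b0 : ℂˣ) : ℂ) ≠ (sig q b0 a : ℂ) := by
    intro hc
    exact hb0 (by rw [ff]; exact mul_inv_eq_one.mpr (Units.ext hc))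
  have hκ : ((sig q b0 (a - b0) : ℂˣ) : ℂ) - (sig q (a - b0) b0 : ℂ) ≠ 0 := by
    intro hc
    have hc' := sub_eq_zero.mp hc
    rw [cs_sub_right q b0 a b0, cs_sub_left q a b0 b0,
      div_eq_div_iff (cs_ne q b0 b0) (cs_ne q b0 b0)] at hc'
    exact hone (mul_right_cancel₀ (cs_ne q b0 b0) hc').symm
  have hrel : ∀ r, ∃ t : ℂ, cc T a r = t • cc T a b0 := by
    intro r
    have h1 := bra_rel q T hT a r b0
    have h2 := bra_rel q T hT a b0 r
    rw [show b0 + r = r + b0 from add_comm b0 r,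
      show a - b0 - r = a - r - b0 from sub_right_comm a b0 r] at h2
    have e1 := congrArg (fun v => ((sig q b0 r : ℂˣ) : ℂ) • v) h1
    have e2 := congrArg (fun v => ((sig q r b0 : ℂˣ) : ℂ) • v) h2
    simp only [smul_add, smul_smul] at e1 e2
    have E : (((sig q b0 r : ℂˣ) : ℂ) * ((sig q b0 (a - r - b0) : ℂˣ) : ℂ)) • cc T a r
        + (((sig q b0 r : ℂˣ) : ℂ) * ((sig q (a - r - b0) r : ℂˣ) : ℂ)) • cc T a b0
        = (((sig q r b0 : ℂˣ) : ℂ) * ((sig q (a - r - b0) b0 : ℂˣ) : ℂ)) • cc T a r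
        + (((sig q r b0 : ℂˣ) : ℂ) * ((sig q r (a - r - b0) : ℂˣ) : ℂ)) • cc T a b0 := by
      rw [← e1, mul_comm (((sig q b0 r : ℂˣ) : ℂ)) (((sig q r b0 : ℂˣ) : ℂ)), e2]
      exact add_comm _ _
    have E2 : (((sig q b0 r : ℂˣ) : ℂ) * (sig q b0 (a - r - b0) : ℂ)
        - ((sig q r b0 : ℂˣ) : ℂ) * (sig q (a - r - b0) b0 : ℂ)) • cc T a r
        = (((sig q r b0 : ℂˣ) : ℂ) * (sig q r (a - r - b0) : ℂ)
        - ((sig q b0 r : ℂˣ) : ℂ) * (sig q (a - r - b0) r : ℂ)) • cc T a b0 := by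
      rw [sub_smul, sub_smul, sub_eq_sub_iff_add_eq_add]
      exact E.trans (add_comm _ _)
    have hκ' : ((sig q b0 r : ℂˣ) : ℂ) * (sig q b0 (a - r - b0) : ℂ)
        - ((sig q r b0 : ℂˣ) : ℂ) * (sig q (a - r - b0) b0 : ℂ) ≠ 0 := by
      rw [← cs_add_right q b0 r (a - r - b0), ← cs_add_left q r (a - r - b0) b0,
        show r + (a - r - b0) = a - b0 from by abel]
      exact hκ
    refine ⟨(((sig q b0 r : ℂˣ) : ℂ) * (sig q b0 (a - r - b0) : ℂ)
        - ((sig q r b0 : ℂˣ) : ℂ) * (sig q (a - r - b0) b0 : ℂ))⁻¹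
        * (((sig q r b0 : ℂˣ) : ℂ) * (sig q r (a - r - b0) : ℂ)
        - ((sig q b0 r : ℂˣ) : ℂ) * (sig q (a - r - b0) r : ℂ)), ?_⟩
    rw [mul_smul, ← E2, smul_smul, inv_mul_cancel₀ hκ', one_smul]
  have hbot : HC1 C ⊓ Submodule.span ℂ
      {v | ∃ r s : Fin (n+1) → ℤ, r + s = a ∧ v = bra (T r) (T s)} = ⊥ := by
    rw [eq_bot_iff]
    rintro x hx
    obtain ⟨hx1, hx2⟩ := Submodule.mem_inf.mp hx
    obtain ⟨t, ht⟩ : ∃ t : ℂ, x = t • cc T a b0 := by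
      have hle : Submodule.span ℂ
          {v : (C ⊗[ℂ] C) ⧸ Jmod C | ∃ r s, r + s = a ∧ v = bra (T r) (T s)}
          ≤ Submodule.span ℂ {cc T a b0} := by
        rw [Submodule.span_le]
        rintro v ⟨r, s, hrs, rfl⟩
        have hs : s = a - r := by rw [← hrs]; abel
        subst hs
        obtain ⟨t, ht⟩ := hrel r
        exact Submodule.mem_span_singleton.mpr ⟨t, ht.symm⟩
      obtain ⟨t, ht⟩ := Submodule.mem_span_singleton.mp (hle hx2)
      exact ⟨t, ht.symm⟩
    obtain ⟨w, hw, hwx⟩ := hx1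
    have hmem : t • (T b0 ⊗ₜ[ℂ] T (a - b0)) - w ∈ Jmod C := by
      rw [← Submodule.Quotient.mk_eq_zero (Jmod C), Submodule.Quotient.mk_sub,
        Submodule.Quotient.mk_smul,
        show (Submodule.Quotient.mk (T b0 ⊗ₜ[ℂ] T (a - b0)) : (C ⊗[ℂ] C) ⧸ Jmod C)
          = cc T a b0 from rfl,
        show (Submodule.Quotient.mk w : (C ⊗[ℂ] C) ⧸ Jmod C) = x from hwx, ← ht, sub_self]
    have h0 := Jmod_le_ker (C := C) hmem
    rw [LinearMap.mem_ker, map_sub, map_smul, LinearMap.mem_ker.mp hw, sub_zero,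
      brkt_tmul, hT, hT, show b0 + (a - b0) = a from by abel,
      show (a - b0) + b0 = a from by abel, ← sub_smul, smul_smul] at h0
    rw [Submodule.mem_bot]
    rcases smul_eq_zero.mp h0 with h0' | h0'
    · rcases mul_eq_zero.mp h0' with h' | h'
      · rw [ht, h', zero_smul]
      · exact absurd h' hκ
    · exact absurd h0' (hTind.ne_zero a)
  rw [hbot]
  exact finrank_bot ℂ _

end Cases

section Final

variable {n : ℕ} (q : Fin (n+1) → Fin (n+1) → ℂˣ)
variable {C : Type*} [Ring C] [Algebra ℂ C] (T : (Fin (n+1) → ℤ) → C)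

lemma final_rad_zero (hT : ∀ a b, T a * T b = ((sig q a b : ℂ)) • T (a + b))
    (hTind : LinearIndependent ℂ T)
    (hTspan : Submodule.span ℂ (Set.range T) = ⊤)
    {a : Fin (n+1) → ℤ} (hrad : ∀ b, ff q a b = 1) (ha : a = 0) :
    Module.finrank ℂ
      ↥(HC1 C ⊓ Submodule.span ℂ
          {v | ∃ r s : Fin (n+1) → ℤ, r + s = a ∧ v = bra (T r) (T s)}) = n + 1 := by
  rw [inf_eq_right.mpr (V_le_HC1 q T hT hrad)]
  have hspan : Submodule.span ℂ
      {v : (C ⊗[ℂ] C) ⧸ Jmod C | ∃ r s, r + s = a ∧ v = bra (T r) (T s)}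
      = Submodule.span ℂ (Set.range fun i : Fin (n+1) => cc T a (ee i)) := by
    refine le_antisymm (span_S_le_g q T hT hrad) ?_
    rw [Submodule.span_le]
    rintro v ⟨i, rfl⟩
    exact Submodule.subset_span ⟨ee i, a - ee i, by abel, rfl⟩
  rw [hspan]
  have hLI : LinearIndependent ℂ fun i : Fin (n+1) => cc T a (ee i) := by
    have hLs : ∀ i : Fin (n+1), ∃ L : ((C ⊗[ℂ] C) ⧸ Jmod C) →ₗ[ℂ] ℂ,
        ∀ r, L (cc T a r)
          = (∑ k, (if i = k then (1:ℂ) else 0) * (r k : ℂ)) * (sig q r (a - r) : ℂ) :=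
      fun i => exists_L q T hT hTind hTspan hrad (fun k => if i = k then 1 else 0)
        (by rw [ha]; simp)
    choose L hL using hLs
    refine indep_of_dual _ L (fun j => ((sig q (ee j) (a - ee j) : ℂˣ) : ℂ))
      (fun j => cs_ne q _ _) ?_
    intro i j
    rw [hL i (ee j)]
    have hd : (∑ k, (if i = k then (1:ℂ) else 0) * ((ee j k : ℤ) : ℂ))
        = if i = j then 1 else 0 := by
      rw [sum_delta_mul]
      simp [ee, eq_comm]
    rw [hd]
    by_cases hij : i = j
    · rw [if_pos hij, if_pos hij, one_mul]
    · rw [if_neg hij, if_neg hij, zero_mul]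
  rw [finrank_span_eq_card hLI, Fintype.card_fin]

lemma final_rad_ne (hT : ∀ a b, T a * T b = ((sig q a b : ℂ)) • T (a + b))
    (hTind : LinearIndependent ℂ T)
    (hTspan : Submodule.span ℂ (Set.range T) = ⊤)
    {a : Fin (n+1) → ℤ} (hrad : ∀ b, ff q a b = 1) (ha : a ≠ 0) :
    Module.finrank ℂ
      ↥(HC1 C ⊓ Submodule.span ℂ
          {v | ∃ r s : Fin (n+1) → ℤ, r + s = a ∧ v = bra (T r) (T s)}) = n := by
  classical
  obtain ⟨i0, hi0⟩ := Function.ne_iff.mp ha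
  have hi0' : a i0 ≠ 0 := by simpa using hi0
  have hane : ((a i0 : ℤ) : ℂ) ≠ 0 := Int.cast_ne_zero.mpr hi0'
  rw [inf_eq_right.mpr (V_le_HC1 q T hT hrad)]
  have hDmem : ∀ i, Dfun q T a (ee i) ∈ Submodule.span ℂ
      (Set.range fun j : {j : Fin (n+1) // j ≠ i0} => cc T a (ee (j : Fin (n+1)))) := by
    have hmem' : ∀ i, i ≠ i0 → Dfun q T a (ee i) ∈ Submodule.span ℂ
        (Set.range fun j : {j : Fin (n+1) // j ≠ i0} => cc T a (ee (j : Fin (n+1)))) := by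
      intro i hi
      rw [Dfun]
      exact Submodule.smul_mem _ _ (Submodule.subset_span ⟨⟨i, hi⟩, rfl⟩)
    intro i
    by_cases hi : i = i0
    · subst hi
      have hrel := Dfun_relation q T hT hrad
      have hsum := (Finset.add_sum_erase Finset.univ
        (fun i => (a i) • Dfun q T a (ee i)) (Finset.mem_univ i)).trans hrel
      have hD : (a i) • Dfun q T a (ee i)
          = -∑ j ∈ Finset.univ.erase i, (a j) • Dfun q T a (ee j) :=
        eq_neg_of_add_eq_zero_left hsum
      have hstep : Dfun q T a (ee i) = ((a i : ℤ) : ℂ)⁻¹ • (((a i : ℤ) : ℂ) • Dfun q T a (ee i)) :=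
        (inv_smul_smul₀ hane _).symm
      rw [hstep, Int.cast_smul_eq_zsmul, hD]
      refine Submodule.smul_mem _ _ (Submodule.neg_mem _ (Submodule.sum_mem _ fun j hj => ?_))
      rw [← Int.cast_smul_eq_zsmul ℂ]
      exact Submodule.smul_mem _ _ (hmem' j (Finset.mem_erase.mp hj).1)
    · exact hmem' i hi
  have hspan : Submodule.span ℂ
      {v : (C ⊗[ℂ] C) ⧸ Jmod C | ∃ r s, r + s = a ∧ v = bra (T r) (T s)}
      = Submodule.span ℂ
        (Set.range fun j : {j : Fin (n+1) // j ≠ i0} => cc T a (ee (j : Fin (n+1)))) := by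
    refine le_antisymm ?_ ?_
    · rw [Submodule.span_le]
      rintro v ⟨r, s, hrs, rfl⟩
      have hs : s = a - r := by rw [← hrs]; abel
      subst hs
      show cc T a r ∈ _
      rw [cc_eq_smul_Dfun q T a r, Dfun_repr q T hT hrad r]
      refine Submodule.smul_mem _ _ (Submodule.sum_mem _ fun i _ => ?_)
      rw [← Int.cast_smul_eq_zsmul ℂ]
      exact Submodule.smul_mem _ _ (hDmem i)
    · rw [Submodule.span_le]
      rintro v ⟨j, rfl⟩
      exact Submodule.subset_span ⟨ee (j : Fin (n+1)), a - ee (j : Fin (n+1)), by abel, rfl⟩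
  rw [hspan]
  have hLI : LinearIndependent ℂ
      (fun j : {j : Fin (n+1) // j ≠ i0} => cc T a (ee (j : Fin (n+1)))) := by
    have hLs : ∀ i : {j : Fin (n+1) // j ≠ i0}, ∃ L : ((C ⊗[ℂ] C) ⧸ Jmod C) →ₗ[ℂ] ℂ,
        ∀ r, L (cc T a r)
          = (∑ k, ((if (i : Fin (n+1)) = k then (1:ℂ) else 0) * ((a i0 : ℤ) : ℂ)
              - (if i0 = k then (1:ℂ) else 0) * ((a (i : Fin (n+1)) : ℤ) : ℂ)) * (r k : ℂ))
            * (sig q r (a - r) : ℂ) := by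
      intro i
      refine exists_L q T hT hTind hTspan hrad
        (fun k => (if (i : Fin (n+1)) = k then (1:ℂ) else 0) * ((a i0 : ℤ) : ℂ)
          - (if i0 = k then (1:ℂ) else 0) * ((a (i : Fin (n+1)) : ℤ) : ℂ)) ?_
      have hterm : ∀ k, ((if (i : Fin (n+1)) = k then (1:ℂ) else 0) * ((a i0 : ℤ) : ℂ)
          - (if i0 = k then (1:ℂ) else 0) * ((a (i : Fin (n+1)) : ℤ) : ℂ)) * ((a k : ℤ) : ℂ)
          = (if (i : Fin (n+1)) = k then (1:ℂ) else 0) * (((a i0 : ℤ) : ℂ) * ((a k : ℤ) : ℂ))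
            - (if i0 = k then (1:ℂ) else 0) * (((a (i : Fin (n+1)) : ℤ) : ℂ) * ((a k : ℤ) : ℂ)) :=
        fun k => by ring
      rw [Finset.sum_congr rfl fun k _ => hterm k, Finset.sum_sub_distrib,
        sum_delta_mul, sum_delta_mul]
      ring
    choose L hL using hLs
    refine indep_of_dual _ L
      (fun j => ((a i0 : ℤ) : ℂ) * ((sig q (ee (j : Fin (n+1))) (a - ee (j : Fin (n+1))) : ℂˣ) : ℂ))
      (fun j => mul_ne_zero hane (cs_ne q _ _)) ?_
    intro i j
    rw [hL i (ee (j : Fin (n+1)))]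
    have hd : (∑ k, ((if (i : Fin (n+1)) = k then (1:ℂ) else 0) * ((a i0 : ℤ) : ℂ)
        - (if i0 = k then (1:ℂ) else 0) * ((a (i : Fin (n+1)) : ℤ) : ℂ))
          * ((ee (j : Fin (n+1)) k : ℤ) : ℂ))
        = if i = j then ((a i0 : ℤ) : ℂ) else 0 := by
      rw [sum_mul_ee]
      by_cases hij : i = j
      · rw [if_pos (show (i : Fin (n+1)) = (j : Fin (n+1)) from by rw [hij]),
          if_neg (fun hc => j.2 hc.symm), if_pos hij, one_mul, zero_mul, sub_zero]
      · rw [if_neg (fun hc => hij (Subtype.ext hc)), if_neg (fun hc => j.2 hc.symm),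
          if_neg hij, zero_mul, zero_mul, sub_zero]
    rw [hd]
    by_cases hij : i = j
    · rw [if_pos hij, if_pos hij]
    · rw [if_neg hij, if_neg hij, zero_mul]
  rw [finrank_span_eq_card hLI]
  rw [Fintype.card_subtype_compl, Fintype.card_subtype_eq, Fintype.card_fin]
  omega

end Final

end Stmt13Aux

theorem stmt13 {n : ℕ} (q : Fin (n+1) → Fin (n+1) → ℂˣ)
    (hq1 : ∀ i, q i i = 1) (hq2 : ∀ i j, q i j = (q j i)⁻¹)
    (hroot : ∀ i j, ∃ m : ℕ, 0 < m ∧ q i j ^ m = 1)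
    {C : Type*} [Ring C] [Algebra ℂ C]
    (T : (Fin (n+1) → ℤ) → C)
    (hT : ∀ a b, T a * T b = ((sig q a b : ℂ)) • T (a + b))
    (hT0 : T 0 = 1)
    (hTind : LinearIndependent ℂ T)
    (hTspan : Submodule.span ℂ (Set.range T) = ⊤)
    (a : Fin (n+1) → ℤ) :
    -- the degree-`a` component of `HC₁(ℂ_q)`
    (¬ (∀ b, ff q a b = 1) →
      Module.finrank ℂ
        ↥(HC1 C ⊓ Submodule.span ℂ
            {v | ∃ r s : Fin (n+1) → ℤ, r + s = a ∧ v = bra (T r) (T s)}) = 0) ∧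
    ((∀ b, ff q a b = 1) → a ≠ 0 →
      Module.finrank ℂ
        ↥(HC1 C ⊓ Submodule.span ℂ
            {v | ∃ r s : Fin (n+1) → ℤ, r + s = a ∧ v = bra (T r) (T s)}) = n) ∧
    (a = 0 →
      Module.finrank ℂ
        ↥(HC1 C ⊓ Submodule.span ℂ
            {v | ∃ r s : Fin (n+1) → ℤ, r + s = a ∧ v = bra (T r) (T s)}) = n + 1) := by
  refine ⟨fun hbad => Stmt13Aux.final_notrad q T hT hTind hbad,
    fun hrad ha => Stmt13Aux.final_rad_ne q T hT hTind hTspan hrad ha,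
    fun ha => Stmt13Aux.final_rad_zero q T hT hTind hTspan ?_ ha⟩
  intro b
  rw [ff, ha, Stmt13Aux.sig_zero_left, Stmt13Aux.sig_zero_right]
  simp
end
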